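/- Let Ω = (0,1)³ ⊂ ℝ³, let A ∈ Sym₃, and let u : ℝ³ → ℝ³ be continuously differentiable with u(x) = A·x for every x ∈ ∂Ω. Let ε(x) = (1/2)(Du(x) + Du(x)ᵀ) be the symmetric gradient. Then ∫_Ω (ε₂₃(x)² − ε₂₂(x)ε₃₃(x)) dx ≥ A₂₃² − A₂₂A₃₃. -/

import Mathlib

open Matrix

noncomputable section

/-- 3×3 real matrices; symmetric ones model Sym₃. -/
abbrev Mat := Matrix (Fin 3) (Fin 3) ℝ

/-- Inner product on matrices: a:b = tr(ab). -/
def inn (a b : Mat) : ℝ := (a * b).trace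

/-- Isotropic elasticity tensor with Lamé parameters l, m: ε ↦ l(tr ε)E + 2mε. -/
def isoC (l m : ℝ) (e : Mat) : Mat := (l * e.trace) • (1 : Mat) + (2*m) • e

/-- The interface operator K(n) for material parameters (μ, ν):
K(n):q = (1/(2μ))(qₙ⊗n + n⊗qₙ − (qₙₙ/(1−ν)) n⊗n). -/
def Kop (μ ν : ℝ) (n : Fin 3 → ℝ) (q : Mat) : Mat :=
  (1/(2*μ)) • (vecMulVec (q.mulVec n) n + vecMulVec n (q.mulVec n)
    - ((n ⬝ᵥ q.mulVec n)/(1-ν)) • vecMulVec n n)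


/-- The symmetrized gradient ε(x) = (1/2)(Du(x) + Du(x)ᵀ), entrywise. -/
def symGrad (u : (Fin 3 → ℝ) → (Fin 3 → ℝ)) (x : Fin 3 → ℝ) (i j : Fin 3) : ℝ :=
  (1/2) * (fderiv ℝ u x (Pi.single j 1) i + fderiv ℝ u x (Pi.single i 1) j)

/-- The open unit cube Ω = (0,1)³. -/
def unitCube : Set (Fin 3 → ℝ) := Set.univ.pi fun _ : Fin 3 => Set.Ioo (0:ℝ) 1

namespace TLB

open MeasureTheory Set Filter
open scoped Convolution Topology

abbrev E3 : Type := Fin 3 → ℝ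

def ee (i : Fin 3) : E3 := Pi.single i 1

lemma isOpen_unitCube : IsOpen unitCube :=
  isOpen_set_pi finite_univ fun _ _ => isOpen_Ioo

lemma closure_unitCube : closure unitCube = Set.Icc (0:E3) 1 := by
  rw [unitCube, closure_pi_set]
  simp only [Function.comp, closure_Ioo (zero_ne_one)]
  exact Set.pi_univ_Icc _ _

lemma frontier_unitCube : frontier unitCube = Set.Icc (0:E3) 1 \ unitCube := by
  rw [frontier, closure_unitCube, isOpen_unitCube.interior_eq]

lemma mem_frontier_unitCube {x : E3} (hx : ∀ m, x m ∈ Set.Icc (0:ℝ) 1)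
    (i : Fin 3) (hi : x i = 0 ∨ x i = 1) : x ∈ frontier unitCube := by
  rw [frontier_unitCube]
  constructor
  · rw [← Set.pi_univ_Icc]; exact fun m _ => hx m
  · intro hmem
    have := hmem i (Set.mem_univ i)
    rcases hi with h | h <;> rw [h] at this <;> simp at this

lemma div_sum_eq {W fS : E3 → ℝ} (hW : ContDiff ℝ 2 W) (hfS : ContDiff ℝ 1 fS) (x : E3) :
    fderiv ℝ (fun y => fS y * fderiv ℝ W y (ee 2)) x (ee 1)
      - fderiv ℝ (fun y => fS y * fderiv ℝ W y (ee 1)) x (ee 2)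
    = fderiv ℝ fS x (ee 1) * fderiv ℝ W x (ee 2)
      - fderiv ℝ fS x (ee 2) * fderiv ℝ W x (ee 1) := by
  have hW1 : ContDiff ℝ 1 (fderiv ℝ W) := hW.fderiv_right (by norm_num)
  have hWd : Differentiable ℝ W := hW.differentiable (by norm_num)
  have hψ : ∀ j : Fin 3, DifferentiableAt ℝ (fun y => fderiv ℝ W y (ee j)) x := fun j =>
    ((hW1.differentiable one_ne_zero) x).clm_apply (differentiableAt_const _)
  have hfd : ∀ j : Fin 3, fderiv ℝ (fun y => fderiv ℝ W y (ee j)) x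
      = (fderiv ℝ (fderiv ℝ W) x).flip (ee j) := by
    intro j
    rw [fderiv_clm_apply ((hW1.differentiable one_ne_zero) x) (differentiableAt_const _)]
    simp
  have hsymm : fderiv ℝ (fderiv ℝ W) x (ee 1) (ee 2)
      = fderiv ℝ (fderiv ℝ W) x (ee 2) (ee 1) :=
    second_derivative_symmetric_of_eventually
      (Filter.Eventually.of_forall fun y => (hWd y).hasFDerivAt)
      ((hW1.differentiable one_ne_zero) x).hasFDerivAt (ee 1) (ee 2)
  have hfSd := hfS.differentiable one_ne_zero
  rw [fderiv_fun_mul (hfSd x) (hψ 2), fderiv_fun_mul (hfSd x) (hψ 1)]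
  simp only [ContinuousLinearMap.add_apply, ContinuousLinearMap.smul_apply, smul_eq_mul,
    hfd, ContinuousLinearMap.flip_apply]
  rw [hsymm]; ring

variable {u : E3 → E3} {A : Mat}

lemma fderiv_component {u : E3 → E3} (hud : Differentiable ℝ u) (k : Fin 3) (x v : E3) :
    fderiv ℝ (fun y => u y k) x v = fderiv ℝ u x v k := by
  have h : HasFDerivAt (fun y => u y k)
      ((ContinuousLinearMap.proj k).comp (fderiv ℝ u x)) x := by
    exact (ContinuousLinearMap.proj k).hasFDerivAt.comp x (hud x).hasFDerivAt
  rw [h.fderiv]; rfl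

lemma tangential_fderiv (hud : Differentiable ℝ u)
    (hbc : ∀ x ∈ frontier unitCube, u x = A.mulVec x) {x v : E3}
    (hx : ∀ᶠ t : ℝ in 𝓝 0, x + t • v ∈ frontier unitCube) :
    fderiv ℝ u x v = A.mulVec v := by
  have hline : HasDerivAt (fun t : ℝ => x + t • v) v 0 := by
    simpa using (((hasDerivAt_id (0:ℝ)).smul_const v).const_add x)
  have h1 : HasDerivAt (fun t : ℝ => u (x + t • v)) (fderiv ℝ u x v) 0 := by
    have hx0 : HasFDerivAt u (fderiv ℝ u x) (x + (0:ℝ) • v) := by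
      simpa using (hud x).hasFDerivAt
    exact hx0.comp_hasDerivAt 0 hline
  have h2 : HasDerivAt (fun t : ℝ => A.mulVec x + t • A.mulVec v) (A.mulVec v) 0 := by
    simpa using (((hasDerivAt_id (0:ℝ)).smul_const (A.mulVec v)).const_add (A.mulVec x))
  have heq : (fun t : ℝ => u (x + t • v)) =ᶠ[𝓝 (0:ℝ)]
      fun t : ℝ => A.mulVec x + t • A.mulVec v := by
    filter_upwards [hx] with t ht
    rw [hbc _ ht, Matrix.mulVec_add, Matrix.mulVec_smul]
  exact ((h2.congr_of_eventuallyEq heq).unique h1).symm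

def ins (i : Fin 3) (c : ℝ) (y : Fin 2 → ℝ) : E3 := i.insertNth c y

@[simp] lemma ins_apply_same (i : Fin 3) (c : ℝ) (y : Fin 2 → ℝ) : ins i c y i = c :=
  Fin.insertNth_apply_same (α := fun _ => ℝ) i c y

@[simp] lemma ins_apply_succAbove (i : Fin 3) (c : ℝ) (y : Fin 2 → ℝ) (m : Fin 2) :
    ins i c y (i.succAbove m) = y m :=
  Fin.insertNth_apply_succAbove (α := fun _ => ℝ) i c y m

lemma insertNth_coord_mem {i : Fin 3} {c : ℝ} (hc : c = 0 ∨ c = 1)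
    {y : Fin 2 → ℝ} (hy : ∀ m, y m ∈ Set.Ioo (0:ℝ) 1) (m : Fin 3) :
    (ins i c y) m ∈ Set.Icc (0:ℝ) 1 := by
  by_cases hm : m = i
  · subst hm
    rw [ins_apply_same]
    rcases hc with h | h <;> rw [h] <;> norm_num
  · obtain ⟨m', rfl⟩ := Fin.exists_succAbove_eq hm
    rw [ins_apply_succAbove]
    exact Set.mem_Icc_of_Ioo (hy m')

lemma insertNth_mem_frontier {i : Fin 3} {c : ℝ} (hc : c = 0 ∨ c = 1)
    {y : Fin 2 → ℝ} (hy : ∀ m, y m ∈ Set.Ioo (0:ℝ) 1) :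
    ins i c y ∈ frontier unitCube := by
  refine mem_frontier_unitCube (insertNth_coord_mem hc hy) i ?_
  rw [ins_apply_same]; exact hc

lemma face_segment_frontier {i j : Fin 3} (hij : j ≠ i) {c : ℝ} (hc : c = 0 ∨ c = 1)
    {y : Fin 2 → ℝ} (hy : ∀ m, y m ∈ Set.Ioo (0:ℝ) 1) :
    ∀ᶠ t : ℝ in 𝓝 (0:ℝ), (ins i c y) + t • ee j ∈ frontier unitCube := by
  have key : ∀ m : Fin 2, ∀ᶠ t : ℝ in 𝓝 (0:ℝ),
      (ins i c y + t • ee j) (i.succAbove m) ∈ Set.Ioo (0:ℝ) 1 := by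
    intro m
    have hco : Continuous fun t : ℝ =>
        (ins i c y + t • ee j) (i.succAbove m) := by
      simp only [Pi.add_apply, Pi.smul_apply, smul_eq_mul]
      exact continuous_const.add (continuous_id.mul continuous_const)
    refine hco.continuousAt.eventually_mem (isOpen_Ioo.mem_nhds ?_)
    simpa using hy m
  filter_upwards [eventually_all.2 key] with t ht
  have hcoord_i : (ins i c y + t • ee j) i = c := by
    simp [ee, Pi.single_eq_of_ne (Ne.symm hij)]
  refine mem_frontier_unitCube ?_ i ?_
  · intro m
    by_cases hm : m = i
    · subst hm
      rw [hcoord_i]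
      rcases hc with h | h <;> rw [h] <;> norm_num
    · obtain ⟨m', rfl⟩ := Fin.exists_succAbove_eq hm
      exact Set.mem_Icc_of_Ioo (ht m')
  · rw [hcoord_i]; exact hc

lemma face_eval (hud : Differentiable ℝ u)
    (hbc : ∀ x ∈ frontier unitCube, u x = A.mulVec x)
    {i j : Fin 3} (hij : j ≠ i) {c : ℝ} (hc : c = 0 ∨ c = 1)
    {y : Fin 2 → ℝ} (hy : ∀ m, y m ∈ Set.Ioo (0:ℝ) 1) :
    fderiv ℝ u (ins i c y) (ee j) = A.mulVec (ee j) :=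
  tangential_fderiv hud hbc (face_segment_frontier hij hc hy)

lemma conv_norm_le {E' : Type*} [NormedAddCommGroup E'] [NormedSpace ℝ E'] [CompleteSpace E']
    (φ : ContDiffBump (0 : E3)) {h : E3 → E'} (hh : Continuous h)
    {C : ℝ} (hb : ∀ y, ‖h y‖ ≤ C) (x : E3) :
    ‖(φ.normed volume ⋆[ContinuousLinearMap.lsmul ℝ ℝ, volume] h) x‖ ≤ 3 * C := by
  have hd : dist ((φ.normed volume ⋆[ContinuousLinearMap.lsmul ℝ ℝ, volume] h) x) (h x)
      ≤ 2 * C := by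
    refine φ.dist_normed_convolution_le hh.aestronglyMeasurable (fun y _ => ?_)
    calc dist (h y) (h x) ≤ ‖h y‖ + ‖h x‖ := dist_le_norm_add_norm _ _
    _ ≤ 2 * C := by have h1 := hb y; have h2 := hb x; linarith
  have h3 := hb x
  have h4 : ‖(φ.normed volume ⋆[ContinuousLinearMap.lsmul ℝ ℝ, volume] h) x‖ - ‖h x‖
      ≤ dist ((φ.normed volume ⋆[ContinuousLinearMap.lsmul ℝ ℝ, volume] h) x) (h x) := by
    rw [dist_eq_norm]; exact norm_sub_norm_le _ _
  linarith

lemma continuous_ins (i : Fin 3) (c : ℝ) : Continuous (ins i c) := by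
  refine continuous_pi fun m => ?_
  by_cases hm : m = i
  · subst hm
    simp only [ins_apply_same]
    exact continuous_const
  · obtain ⟨m', rfl⟩ := Fin.exists_succAbove_eq hm
    simp only [ins_apply_succAbove]
    exact continuous_apply m'

lemma mem_Icc_iff_forall {n : ℕ} {x : Fin n → ℝ} :
    x ∈ Set.Icc (0 : Fin n → ℝ) 1 ↔ ∀ m, x m ∈ Set.Icc (0:ℝ) 1 := by
  simp [Set.mem_Icc, Pi.le_def, forall_and]

lemma ins_mem_Icc {i : Fin 3} {c : ℝ} (hc : c ∈ Set.Icc (0:ℝ) 1)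
    {y : Fin 2 → ℝ} (hy : y ∈ Set.Icc (0 : Fin 2 → ℝ) 1) :
    ins i c y ∈ Set.Icc (0 : E3) 1 := by
  rw [mem_Icc_iff_forall] at hy ⊢
  intro m
  by_cases hm : m = i
  · subst hm; rw [ins_apply_same]; exact hc
  · obtain ⟨m', rfl⟩ := Fin.exists_succAbove_eq hm
    rw [ins_apply_succAbove]; exact hy m'

lemma Icc_subset_ball : Set.Icc (0 : E3) 1 ⊆ Metric.ball (0 : E3) 10 := by
  intro x hx
  rw [mem_Icc_iff_forall] at hx
  rw [Metric.mem_ball, dist_zero_right]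
  have h1 : ‖x‖ ≤ 1 := by
    refine (pi_norm_le_iff_of_nonneg (by norm_num : (0:ℝ) ≤ 1)).2 ?_
    intro m
    rw [Real.norm_eq_abs, abs_le]
    exact ⟨by linarith [(hx m).1], (hx m).2⟩
  linarith

lemma unitCube_subset_Icc : unitCube ⊆ Set.Icc (0:E3) 1 := fun x hx =>
  closure_unitCube ▸ subset_closure hx

lemma volume_square : (volume (Set.Icc (0 : Fin 2 → ℝ) 1)).toReal = 1 := by
  rw [← Set.pi_univ_Icc, volume_pi_pi]
  simp

lemma integral_J {A : Mat} {u : E3 → E3} (hu : ContDiff ℝ 1 u)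
    (hbc : ∀ x ∈ frontier unitCube, u x = A.mulVec x) :
    ∫ x in unitCube, (fderiv ℝ u x (ee 1) 1 * fderiv ℝ u x (ee 2) 2
      - fderiv ℝ u x (ee 2) 1 * fderiv ℝ u x (ee 1) 2)
      = A 1 1 * A 2 2 - A 2 1 * A 1 2 := by
  classical
  have hud : Differentiable ℝ u := hu.differentiable one_ne_zero
  have hcomp : ∀ k : Fin 3, ContDiff ℝ 1 (fun x => u x k) := fun k => by
    exact (ContinuousLinearMap.proj k : E3 →L[ℝ] ℝ).contDiff.comp hu
  set f : E3 → ℝ := fun x => u x 1 with hfdef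
  set g : E3 → ℝ := fun x => u x 2 with hgdef
  have hf : ContDiff ℝ 1 f := hcomp 1
  have hg : ContDiff ℝ 1 g := hcomp 2
  have hfd : Differentiable ℝ f := hf.differentiable one_ne_zero
  have hee : ∀ j : Fin 3, ‖ee j‖ = 1 := fun j => by
    rw [ee, Pi.norm_single, norm_one]
  -- cutoff
  set χ : ContDiffBump (0 : E3) := ⟨10, 20, by norm_num, by norm_num⟩ with hχdef
  set gt : E3 → ℝ := fun x => χ x * g x with hgtdef
  have hgt : ContDiff ℝ 1 gt := (χ.contDiff (n := 1)).mul hg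
  have hgtc : HasCompactSupport gt := χ.hasCompactSupport.mul_right
  have hgt_eqf : ∀ x ∈ Metric.ball (0:E3) 10, gt =ᶠ[nhds x] g := by
    intro x hx
    filter_upwards [Metric.isOpen_ball.mem_nhds hx] with y hy
    have h1 : χ y = 1 := χ.one_of_mem_closedBall (Metric.ball_subset_closedBall hy)
    simp only [hgtdef, h1, one_mul]
  have hgt_fderiv : ∀ x ∈ Metric.ball (0:E3) 10, fderiv ℝ gt x = fderiv ℝ g x :=
    fun x hx => (hgt_eqf x hx).fderiv_eq
  -- mollifiers
  set φb : ℕ → ContDiffBump (0 : E3) := fun n =>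
    ⟨((n:ℝ)+1)⁻¹/2, ((n:ℝ)+1)⁻¹, by positivity, by
      have h : (0:ℝ) < ((n:ℝ)+1)⁻¹ := by positivity
      linarith⟩ with hφbdef
  have hφb_rout : Filter.Tendsto (fun n => (φb n).rOut) Filter.atTop (nhds 0) := by
    simpa [hφbdef, one_div] using tendsto_one_div_add_atTop_nhds_zero_nat (𝕜 := ℝ)
  set w : ℕ → E3 → ℝ :=
    fun n => (φb n).normed volume ⋆[ContinuousLinearMap.lsmul ℝ ℝ, volume] gt with hwdef
  have hgtl : MeasureTheory.LocallyIntegrable gt volume := hgt.continuous.locallyIntegrable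
  have hw_smooth : ∀ n, ContDiff ℝ 2 (w n) := fun n =>
    (φb n).hasCompactSupport_normed.contDiff_convolution_left
      (ContinuousLinearMap.lsmul ℝ ℝ) ((φb n).contDiff_normed (n := 2)) hgtl
  have hw_fderiv : ∀ n x, fderiv ℝ (w n) x
      = ((φb n).normed volume ⋆[(ContinuousLinearMap.lsmul ℝ ℝ).precompR E3, volume]
          fderiv ℝ gt) x :=
    fun n x => (hgtc.hasFDerivAt_convolution_right (ContinuousLinearMap.lsmul ℝ ℝ)
      ((φb n).integrable_normed.locallyIntegrable) hgt x).fderiv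
  have hDgt_cont : Continuous (fderiv ℝ gt) := hgt.continuous_fderiv one_ne_zero
  have hDgtc : HasCompactSupport (fderiv ℝ gt) := hgtc.fderiv (𝕜 := ℝ)
  have hw_fderiv_apply : ∀ n x (j : Fin 3), fderiv ℝ (w n) x (ee j)
      = ((φb n).normed volume ⋆[ContinuousLinearMap.lsmul ℝ ℝ, volume]
          (fun a => fderiv ℝ gt a (ee j))) x := by
    intro n x j
    rw [hw_fderiv n x]
    exact convolution_precompR_apply (ContinuousLinearMap.lsmul ℝ ℝ)
      ((φb n).integrable_normed.locallyIntegrable) hDgtc hDgt_cont x (ee j)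
  have hDw_tendsto : ∀ (x : E3) (j : Fin 3),
      Filter.Tendsto (fun n => fderiv ℝ (w n) x (ee j)) Filter.atTop
        (nhds (fderiv ℝ gt x (ee j))) := by
    intro x j
    have hc : Continuous fun a => fderiv ℝ gt a (ee j) := hDgt_cont.clm_apply continuous_const
    simp only [hw_fderiv_apply]
    exact ContDiffBump.convolution_tendsto_right_of_continuous hφb_rout hc x
  obtain ⟨Cg, hCg⟩ := hDgtc.exists_bound_of_continuous hDgt_cont
  have hCg0 : 0 ≤ Cg := le_trans (norm_nonneg _) (hCg 0)
  have hCg' : ∀ (j : Fin 3) (a : E3), ‖fderiv ℝ gt a (ee j)‖ ≤ Cg := by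
    intro j a
    have h1 := (fderiv ℝ gt a).le_opNorm (ee j)
    rw [hee j, mul_one] at h1
    exact le_trans h1 (hCg a)
  have hDw_bound : ∀ (j : Fin 3) (n : ℕ) (x : E3),
      ‖fderiv ℝ (w n) x (ee j)‖ ≤ 3 * Cg := by
    intro j n x
    rw [hw_fderiv_apply]
    exact conv_norm_le (φb n) (hDgt_cont.clm_apply continuous_const) (hCg' j) x
  -- bound for fderiv f on the cube
  obtain ⟨Mf, hMf⟩ := isCompact_Icc.exists_bound_of_continuousOn
    (s := Set.Icc (0:E3) 1) ((hu.continuous_fderiv one_ne_zero).continuousOn)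
  have hMf0 : 0 ≤ Mf := le_trans (norm_nonneg _) (hMf 0 (by rw [mem_Icc_iff_forall]; intro m; norm_num))
  have hDf_bound : ∀ (j : Fin 3), ∀ x ∈ Set.Icc (0:E3) 1, ‖fderiv ℝ f x (ee j)‖ ≤ Mf := by
    intro j x hx
    rw [fderiv_component hud 1 x (ee j)]
    calc ‖fderiv ℝ u x (ee j) 1‖ ≤ ‖fderiv ℝ u x (ee j)‖ := norm_le_pi_norm _ 1
    _ ≤ ‖fderiv ℝ u x‖ * ‖ee j‖ := (fderiv ℝ u x).le_opNorm _
    _ ≤ Mf := by rw [hee j, mul_one]; exact hMf x hx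
  -- bound for f on the cube
  obtain ⟨Mv, hMv⟩ := isCompact_Icc.exists_bound_of_continuousOn
    (s := Set.Icc (0:E3) 1) (hf.continuous.continuousOn)
  -- the vector field for the divergence theorem
  set Fv : ℕ → Fin 3 → E3 → ℝ := fun n =>
    ![fun _ => 0, fun x => f x * fderiv ℝ (w n) x (ee 2),
      fun x => -(f x * fderiv ℝ (w n) x (ee 1))] with hFvdef
  set sq : Set (Fin 2 → ℝ) := Set.Icc 0 1 with hsqdef
  have key : ∀ n : ℕ,
      (∫ x in Set.Icc (0:E3) 1,
        (fderiv ℝ f x (ee 1) * fderiv ℝ (w n) x (ee 2)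
          - fderiv ℝ f x (ee 2) * fderiv ℝ (w n) x (ee 1)))
      = ∑ i : Fin 3, ((∫ y in sq, Fv n i (ins i 1 y)) - ∫ y in sq, Fv n i (ins i 0 y)) := by
    intro n
    have hWs : ContDiff ℝ 2 (w n) := hw_smooth n
    have hW1 : ContDiff ℝ 1 (fderiv ℝ (w n)) := hWs.fderiv_right (by norm_num)
    have hψc : ∀ j : Fin 3, ContDiff ℝ 1 fun x => fderiv ℝ (w n) x (ee j) :=
      fun j => hW1.clm_apply contDiff_const
    have hFC1 : ∀ i, ContDiff ℝ 1 (Fv n i) := by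
      intro i
      fin_cases i
      · simp only [hFvdef, Matrix.cons_val_zero]
        exact contDiff_const
      · simp only [hFvdef, Matrix.cons_val_one, Matrix.head_cons]
        exact hf.mul (hψc 2)
      · simp only [hFvdef, Matrix.cons_val_two, Matrix.tail_cons, Matrix.head_cons]
        exact (hf.mul (hψc 1)).neg
    have hpt : ∀ x : E3, (∑ i, fderiv ℝ (Fv n i) x (Pi.single i 1))
        = fderiv ℝ f x (ee 1) * fderiv ℝ (w n) x (ee 2)
          - fderiv ℝ f x (ee 2) * fderiv ℝ (w n) x (ee 1) := by
      intro x
      rw [Fin.sum_univ_three]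
      have h0 : Fv n 0 = fun _ => (0:ℝ) := rfl
      have h1 : Fv n 1 = fun x => f x * fderiv ℝ (w n) x (ee 2) := rfl
      have h2 : Fv n 2 = fun x => -(f x * fderiv ℝ (w n) x (ee 1)) := rfl
      rw [h0, h1, h2, fderiv_fun_const, fderiv_fun_neg]
      simp only [Pi.zero_apply, ContinuousLinearMap.zero_apply, ContinuousLinearMap.neg_apply]
      have hds := div_sum_eq hWs hf x
      rw [show (Pi.single 1 1 : E3) = ee 1 from rfl, show (Pi.single 2 1 : E3) = ee 2 from rfl]
      linarith [hds]
    have hH := MeasureTheory.integral_divergence_of_hasFDerivAt_off_countable'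
      (0:E3) 1 (Pi.le_def.2 fun i => zero_le_one)
      (Fv n) (fun i x => fderiv ℝ (Fv n i) x) ∅ Set.countable_empty
      (fun i => (hFC1 i).continuous.continuousOn)
      (fun x _ i => (((hFC1 i).differentiable one_ne_zero) x).hasFDerivAt)
      (by
        have hco : Continuous fun x => ∑ i, fderiv ℝ (Fv n i) x (Pi.single i 1) :=
          continuous_finset_sum _ fun i _ =>
            (((hFC1 i).continuous_fderiv one_ne_zero).clm_apply continuous_const)
        exact hco.continuousOn.integrableOn_compact isCompact_Icc)
    exact (setIntegral_congr_fun measurableSet_Icc fun x _ => (hpt x).symm).trans hH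
  have key2 : ∀ n : ℕ,
      (∫ x in Set.Icc (0:E3) 1,
        (fderiv ℝ f x (ee 1) * fderiv ℝ (w n) x (ee 2)
          - fderiv ℝ f x (ee 2) * fderiv ℝ (w n) x (ee 1)))
      = ((∫ y in sq, f (ins 1 1 y) * fderiv ℝ (w n) (ins 1 1 y) (ee 2))
          - ∫ y in sq, f (ins 1 0 y) * fderiv ℝ (w n) (ins 1 0 y) (ee 2))
        - ((∫ y in sq, f (ins 2 1 y) * fderiv ℝ (w n) (ins 2 1 y) (ee 1))
          - ∫ y in sq, f (ins 2 0 y) * fderiv ℝ (w n) (ins 2 0 y) (ee 1)) := by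
    intro n
    rw [key n, Fin.sum_univ_three]
    have h0 : ∀ c : ℝ, (∫ y in sq, Fv n 0 (ins 0 c y)) = 0 := by
      intro c
      have hz : Fv n 0 = fun _ => (0:ℝ) := rfl
      rw [hz]
      simp
    have h1 : ∀ c : ℝ, (∫ y in sq, Fv n 1 (ins 1 c y))
        = ∫ y in sq, f (ins 1 c y) * fderiv ℝ (w n) (ins 1 c y) (ee 2) := fun c => rfl
    have h2 : ∀ c : ℝ, (∫ y in sq, Fv n 2 (ins 2 c y))
        = - ∫ y in sq, f (ins 2 c y) * fderiv ℝ (w n) (ins 2 c y) (ee 1) := by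
      intro c
      have hh : (fun y => Fv n 2 (ins 2 c y))
          = fun y => -(f (ins 2 c y) * fderiv ℝ (w n) (ins 2 c y) (ee 1)) := rfl
      rw [show (∫ y in sq, Fv n 2 (ins 2 c y))
          = ∫ y in sq, -(f (ins 2 c y) * fderiv ℝ (w n) (ins 2 c y) (ee 1)) from by rw [← hh],
        integral_neg]
    rw [h0, h0, h1, h1, h2, h2]
    ring
  have hMv0 : 0 ≤ Mv :=
    le_trans (norm_nonneg _) (hMv 0 (by rw [mem_Icc_iff_forall]; intro m; norm_num))
  have int_tend : Filter.Tendsto (fun n => ∫ x in Set.Icc (0:E3) 1,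
      (fderiv ℝ f x (ee 1) * fderiv ℝ (w n) x (ee 2)
        - fderiv ℝ f x (ee 2) * fderiv ℝ (w n) x (ee 1))) Filter.atTop
      (nhds (∫ x in Set.Icc (0:E3) 1,
        (fderiv ℝ f x (ee 1) * fderiv ℝ gt x (ee 2)
          - fderiv ℝ f x (ee 2) * fderiv ℝ gt x (ee 1)))) := by
    have hDf_cont : ∀ j : Fin 3, Continuous fun x => fderiv ℝ f x (ee j) :=
      fun j => ((hf.continuous_fderiv one_ne_zero).clm_apply continuous_const)
    refine tendsto_integral_of_dominated_convergence
      (fun _ => Mf * (3*Cg) + Mf * (3*Cg)) (fun n => ?_) ?_ (fun n => ?_) ?_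
    · exact (((hDf_cont 1).mul
        (((hw_smooth n).continuous_fderiv (by norm_num)).clm_apply continuous_const)).sub
        ((hDf_cont 2).mul
        (((hw_smooth n).continuous_fderiv (by norm_num)).clm_apply continuous_const))).aestronglyMeasurable
    · exact (integrableOn_const isCompact_Icc.measure_lt_top.ne)
    · refine (ae_restrict_iff' measurableSet_Icc).2 (Filter.Eventually.of_forall fun x hx => ?_)
      have b1 := hDf_bound 1 x hx
      have b2 := hDf_bound 2 x hx
      have c1 := hDw_bound 2 n x
      have c2 := hDw_bound 1 n x
      calc ‖fderiv ℝ f x (ee 1) * fderiv ℝ (w n) x (ee 2)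
            - fderiv ℝ f x (ee 2) * fderiv ℝ (w n) x (ee 1)‖
          ≤ ‖fderiv ℝ f x (ee 1) * fderiv ℝ (w n) x (ee 2)‖
            + ‖fderiv ℝ f x (ee 2) * fderiv ℝ (w n) x (ee 1)‖ := norm_sub_le _ _
        _ = ‖fderiv ℝ f x (ee 1)‖ * ‖fderiv ℝ (w n) x (ee 2)‖
            + ‖fderiv ℝ f x (ee 2)‖ * ‖fderiv ℝ (w n) x (ee 1)‖ := by rw [norm_mul, norm_mul]
        _ ≤ Mf * (3*Cg) + Mf * (3*Cg) := add_le_add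
            (mul_le_mul b1 c1 (norm_nonneg _) hMf0) (mul_le_mul b2 c2 (norm_nonneg _) hMf0)
    · exact Filter.Eventually.of_forall fun x =>
        ((hDw_tendsto x 2).const_mul _).sub ((hDw_tendsto x 1).const_mul _)
  have face_tend : ∀ (i j : Fin 3) (c : ℝ), c ∈ Set.Icc (0:ℝ) 1 →
      Filter.Tendsto (fun n => ∫ y in sq, f (ins i c y) * fderiv ℝ (w n) (ins i c y) (ee j))
        Filter.atTop
        (nhds (∫ y in sq, f (ins i c y) * fderiv ℝ gt (ins i c y) (ee j))) := by
    intro i j c hc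
    refine tendsto_integral_of_dominated_convergence
      (fun _ => Mv * (3*Cg)) (fun n => ?_) ?_ (fun n => ?_) ?_
    · exact ((hf.continuous.comp (continuous_ins i c)).mul
        ((((hw_smooth n).continuous_fderiv (by norm_num)).clm_apply continuous_const).comp
          (continuous_ins i c))).aestronglyMeasurable
    · exact (integrableOn_const isCompact_Icc.measure_lt_top.ne)
    · refine (ae_restrict_iff' measurableSet_Icc).2 (Filter.Eventually.of_forall fun y hy => ?_)
      rw [norm_mul]
      exact mul_le_mul (hMv _ (ins_mem_Icc hc hy)) (hDw_bound j n _) (norm_nonneg _) hMv0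
    · exact Filter.Eventually.of_forall fun y => ((hDw_tendsto _ j).const_mul _)
  have hae2 : (Set.pi Set.univ fun _ : Fin 2 => Set.Ioo (0:ℝ) 1) =ᵐ[volume] sq := by
    have h := MeasureTheory.Measure.univ_pi_Ioo_ae_eq_Icc
      (μ := fun _ : Fin 2 => (volume : Measure ℝ)) (f := fun _ => (0:ℝ)) (g := fun _ => 1)
    rw [← MeasureTheory.volume_pi] at h
    exact h
  have pair_eval : ∀ (i j : Fin 3), j ≠ i →
      ((∫ y in sq, f (ins i 1 y) * fderiv ℝ gt (ins i 1 y) (ee j))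
        - ∫ y in sq, f (ins i 0 y) * fderiv ℝ gt (ins i 0 y) (ee j))
      = A 1 i * A 2 j := by
    intro i j hij
    have hint : ∀ c : ℝ, IntegrableOn
        (fun y => f (ins i c y) * fderiv ℝ gt (ins i c y) (ee j)) sq volume := fun c =>
      (((hf.continuous.comp (continuous_ins i c)).mul
        ((hDgt_cont.clm_apply continuous_const).comp
          (continuous_ins i c))).continuousOn).integrableOn_compact isCompact_Icc
    rw [← integral_sub (hint 1) (hint 0), setIntegral_congr_set hae2.symm]
    have heval : ∀ y ∈ (Set.pi Set.univ fun _ : Fin 2 => Set.Ioo (0:ℝ) 1),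
        (f (ins i 1 y) * fderiv ℝ gt (ins i 1 y) (ee j)
          - f (ins i 0 y) * fderiv ℝ gt (ins i 0 y) (ee j)) = A 1 i * A 2 j := by
      intro y hy
      have hy' : ∀ m, y m ∈ Set.Ioo (0:ℝ) 1 := fun m => hy m (Set.mem_univ m)
      have hval : ∀ c : ℝ, (c = 0 ∨ c = 1) → f (ins i c y) = (A.mulVec (ins i c y)) 1 :=
        fun c hc => congrFun (hbc _ (insertNth_mem_frontier hc hy')) 1
      have hder : ∀ c : ℝ, (c = 0 ∨ c = 1) → fderiv ℝ gt (ins i c y) (ee j) = A 2 j := by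
        intro c hc
        have hmem : ins i c y ∈ Set.Icc (0:E3) 1 :=
          ins_mem_Icc (by rcases hc with h|h <;> rw [h] <;> norm_num)
            (by rw [mem_Icc_iff_forall]; exact fun m => Set.mem_Icc_of_Ioo (hy' m))
        rw [hgt_fderiv _ (Icc_subset_ball hmem)]
        have hcg : fderiv ℝ g (ins i c y) (ee j) = fderiv ℝ u (ins i c y) (ee j) 2 :=
          fderiv_component hud 2 _ _
        rw [hcg, face_eval hud hbc hij hc hy']
        simp [ee]
      rw [hval 1 (Or.inr rfl), hval 0 (Or.inl rfl), hder 1 (Or.inr rfl), hder 0 (Or.inl rfl)]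
      have hsub : ins i 1 y - ins i 0 y = ee i := by
        funext m
        by_cases hm : m = i
        · subst hm
          simp [ee]
        · obtain ⟨m', rfl⟩ := Fin.exists_succAbove_eq hm
          simp [ee, Pi.single_eq_of_ne (Fin.succAbove_ne i m')]
      have hdiff : (A.mulVec (ins i 1 y)) 1 - (A.mulVec (ins i 0 y)) 1 = A 1 i := by
        have h1 : (A.mulVec (ins i 1 y)) 1 - (A.mulVec (ins i 0 y)) 1
            = (A.mulVec (ins i 1 y - ins i 0 y)) 1 := by
          rw [Matrix.mulVec_sub]
          rfl
        rw [h1, hsub]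
        simp [ee]
      rw [← sub_mul, hdiff]
    rw [setIntegral_congr_fun (isOpen_set_pi finite_univ fun _ _ => isOpen_Ioo).measurableSet
      heval, setIntegral_const]
    have hv : (volume (Set.pi Set.univ fun _ : Fin 2 => Set.Ioo (0:ℝ) 1)).toReal = 1 := by
      rw [MeasureTheory.volume_pi_pi]
      simp
    rw [measureReal_def, hv, one_smul]
  have hIccJ : (∫ x in Set.Icc (0:E3) 1,
      (fderiv ℝ f x (ee 1) * fderiv ℝ gt x (ee 2)
        - fderiv ℝ f x (ee 2) * fderiv ℝ gt x (ee 1)))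
      = A 1 1 * A 2 2 - A 2 1 * A 1 2 := by
    have h1 := (face_tend 1 2 1 (by norm_num)).sub (face_tend 1 2 0 (by norm_num))
    have h2 := (face_tend 2 1 1 (by norm_num)).sub (face_tend 2 1 0 (by norm_num))
    have hR := h1.sub h2
    rw [pair_eval 1 2 (by decide), pair_eval 2 1 (by decide)] at hR
    have hL : Filter.Tendsto (fun n =>
        ((∫ y in sq, f (ins 1 1 y) * fderiv ℝ (w n) (ins 1 1 y) (ee 2))
          - ∫ y in sq, f (ins 1 0 y) * fderiv ℝ (w n) (ins 1 0 y) (ee 2))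
        - ((∫ y in sq, f (ins 2 1 y) * fderiv ℝ (w n) (ins 2 1 y) (ee 1))
          - ∫ y in sq, f (ins 2 0 y) * fderiv ℝ (w n) (ins 2 0 y) (ee 1))) Filter.atTop
        (nhds (∫ x in Set.Icc (0:E3) 1,
          (fderiv ℝ f x (ee 1) * fderiv ℝ gt x (ee 2)
            - fderiv ℝ f x (ee 2) * fderiv ℝ gt x (ee 1)))) := by
      simpa only [key2] using int_tend
    have := tendsto_nhds_unique hL hR
    rw [this]
    ring
  -- transfer from the closed cube to the open cube, and back to u
  have hae3 : (Set.pi Set.univ fun _ : Fin 3 => Set.Ioo (0:ℝ) 1) =ᵐ[volume] Set.Icc (0:E3) 1 := by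
    have h := MeasureTheory.Measure.univ_pi_Ioo_ae_eq_Icc
      (μ := fun _ : Fin 3 => (volume : Measure ℝ)) (f := fun _ => (0:ℝ)) (g := fun _ => 1)
    rw [← MeasureTheory.volume_pi] at h
    exact h
  have huc : unitCube = (Set.pi Set.univ fun _ : Fin 3 => Set.Ioo (0:ℝ) 1) := rfl
  have step1 : (∫ x in unitCube,
      (fderiv ℝ u x (ee 1) 1 * fderiv ℝ u x (ee 2) 2
        - fderiv ℝ u x (ee 2) 1 * fderiv ℝ u x (ee 1) 2))
      = ∫ x in unitCube,
        (fderiv ℝ f x (ee 1) * fderiv ℝ gt x (ee 2)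
          - fderiv ℝ f x (ee 2) * fderiv ℝ gt x (ee 1)) := by
    refine setIntegral_congr_fun isOpen_unitCube.measurableSet (fun x hx => ?_)
    have hball := Icc_subset_ball (unitCube_subset_Icc hx)
    rw [hgt_fderiv _ hball, fderiv_component hud 1 x (ee 1), fderiv_component hud 1 x (ee 2),
      fderiv_component hud 2 x (ee 1), fderiv_component hud 2 x (ee 2)]
  have step2 : (∫ x in unitCube,
      (fderiv ℝ f x (ee 1) * fderiv ℝ gt x (ee 2)
        - fderiv ℝ f x (ee 2) * fderiv ℝ gt x (ee 1)))
      = ∫ x in Set.Icc (0:E3) 1,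
        (fderiv ℝ f x (ee 1) * fderiv ℝ gt x (ee 2)
          - fderiv ℝ f x (ee 2) * fderiv ℝ gt x (ee 1)) := by
    rw [huc]
    exact setIntegral_congr_set hae3
  rw [step1, step2, hIccJ]

end TLB

open MeasureTheory

/-- translation (polyconvexity) inequality: for u ∈ C¹ with affine boundary
data u = A·x on ∂Ω, ∫_Ω (ε₂₃² − ε₂₂ε₃₃) ≥ A₂₃² − A₂₂A₃₃. -/
theorem translation_lower_bound
    (A : Mat) (hA : A.IsSymm)
    (u : (Fin 3 → ℝ) → (Fin 3 → ℝ)) (hu : ContDiff ℝ 1 u)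
    (hbc : ∀ x ∈ frontier unitCube, u x = A.mulVec x) :
    A 1 2 ^ 2 - A 1 1 * A 2 2
      ≤ ∫ x in unitCube,
          ((symGrad u x 1 2)^2 - (symGrad u x 1 1) * (symGrad u x 2 2)) := by
  have hcont : Continuous fun x => fderiv ℝ u x := hu.continuous_fderiv one_ne_zero
  have hc : ∀ (j k : Fin 3), Continuous fun x => fderiv ℝ u x (TLB.ee j) k :=
    fun j k => (continuous_apply k).comp (hcont.clm_apply continuous_const)
  have hPc : Continuous fun x =>
      (1/4) * (fderiv ℝ u x (TLB.ee 2) 1 - fderiv ℝ u x (TLB.ee 1) 2)^2 :=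
    continuous_const.mul (((hc 2 1).sub (hc 1 2)).pow 2)
  have hJc : Continuous fun x =>
      (fderiv ℝ u x (TLB.ee 1) 1 * fderiv ℝ u x (TLB.ee 2) 2
        - fderiv ℝ u x (TLB.ee 2) 1 * fderiv ℝ u x (TLB.ee 1) 2) :=
    ((hc 1 1).mul (hc 2 2)).sub ((hc 2 1).mul (hc 1 2))
  have hPint : IntegrableOn (fun x =>
      (1/4) * (fderiv ℝ u x (TLB.ee 2) 1 - fderiv ℝ u x (TLB.ee 1) 2)^2) unitCube :=
    ((hPc.continuousOn).integrableOn_compact isCompact_Icc).mono_set TLB.unitCube_subset_Icc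
  have hJint : IntegrableOn (fun x =>
      (fderiv ℝ u x (TLB.ee 1) 1 * fderiv ℝ u x (TLB.ee 2) 2
        - fderiv ℝ u x (TLB.ee 2) 1 * fderiv ℝ u x (TLB.ee 1) 2)) unitCube :=
    ((hJc.continuousOn).integrableOn_compact isCompact_Icc).mono_set TLB.unitCube_subset_Icc
  have hexpand : (fun x => (symGrad u x 1 2)^2 - symGrad u x 1 1 * symGrad u x 2 2)
      = fun x => ((1/4) * (fderiv ℝ u x (TLB.ee 2) 1 - fderiv ℝ u x (TLB.ee 1) 2)^2
        - (fderiv ℝ u x (TLB.ee 1) 1 * fderiv ℝ u x (TLB.ee 2) 2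
          - fderiv ℝ u x (TLB.ee 2) 1 * fderiv ℝ u x (TLB.ee 1) 2)) := by
    funext x
    simp only [symGrad, TLB.ee]
    ring
  rw [show (∫ x in unitCube, ((symGrad u x 1 2)^2 - (symGrad u x 1 1) * (symGrad u x 2 2)))
      = ∫ x in unitCube, ((1/4) * (fderiv ℝ u x (TLB.ee 2) 1 - fderiv ℝ u x (TLB.ee 1) 2)^2
        - (fderiv ℝ u x (TLB.ee 1) 1 * fderiv ℝ u x (TLB.ee 2) 2
          - fderiv ℝ u x (TLB.ee 2) 1 * fderiv ℝ u x (TLB.ee 1) 2)) from by rw [hexpand],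
    integral_sub hPint hJint, TLB.integral_J hu hbc]
  have hPpos : 0 ≤ ∫ x in unitCube,
      (1/4) * (fderiv ℝ u x (TLB.ee 2) 1 - fderiv ℝ u x (TLB.ee 1) 2)^2 :=
    setIntegral_nonneg TLB.isOpen_unitCube.measurableSet (fun x _ => by positivity)
  have hsymm : A 2 1 = A 1 2 := hA.apply 1 2
  rw [hsymm]
  have hsq : A 1 2 ^ 2 = A 1 2 * A 1 2 := by ring
  linarith [hPpos, hsq]
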